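/- Let p ≤ q ≤ r be integers with p ≥ 1. The real symmetric matrix G(p,q,r) is positive definite if and only if p = 1, or (p,q) = (2,2), or (p,q,r) is one of (2,3,3), (2,3,4), (2,3,5). -/

import Mathlib

/-- The vertex type of the tree `T_{p,q,r}`: a central vertex together with three chains
having `p-1`, `q-1` and `r-1` further vertices respectively (so `T_{p,q,r}` has
`p + q + r - 2` vertices when `p, q, r ≥ 1`). -/
abbrev TVertex (p q r : ℕ) : Type := Unit ⊕ (Fin (p - 1) ⊕ (Fin (q - 1) ⊕ Fin (r - 1)))

/-- Adjacency in the tree `T_{p,q,r}`: the central vertex is adjacent to the first vertex of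
each chain, and consecutive vertices of a chain are adjacent. -/
def TAdj {p q r : ℕ} : TVertex p q r → TVertex p q r → Bool
  | Sum.inl _, Sum.inr (Sum.inl i) => i.val == 0
  | Sum.inl _, Sum.inr (Sum.inr (Sum.inl i)) => i.val == 0
  | Sum.inl _, Sum.inr (Sum.inr (Sum.inr i)) => i.val == 0
  | Sum.inr (Sum.inl i), Sum.inl _ => i.val == 0
  | Sum.inr (Sum.inr (Sum.inl i)), Sum.inl _ => i.val == 0
  | Sum.inr (Sum.inr (Sum.inr i)), Sum.inl _ => i.val == 0
  | Sum.inr (Sum.inl i), Sum.inr (Sum.inl j) => (i.val + 1 == j.val) || (j.val + 1 == i.val)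
  | Sum.inr (Sum.inr (Sum.inl i)), Sum.inr (Sum.inr (Sum.inl j)) =>
      (i.val + 1 == j.val) || (j.val + 1 == i.val)
  | Sum.inr (Sum.inr (Sum.inr i)), Sum.inr (Sum.inr (Sum.inr j)) =>
      (i.val + 1 == j.val) || (j.val + 1 == i.val)
  | _, _ => false

/-- The Gram matrix `G(p,q,r)` of the tree `T_{p,q,r}`: diagonal entries `2`, entries `-1`
between adjacent vertices, and `0` otherwise. -/
def gramT (p q r : ℕ) : Matrix (TVertex p q r) (TVertex p q r) ℤ :=
  Matrix.of fun v w => if v = w then 2 else if TAdj v w then -1 else 0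


lemma TAdj_symm {p q r : ℕ} (v w : TVertex p q r) : TAdj v w = TAdj w v := by
  rcases v with _ | (i | (i | i)) <;> rcases w with _ | (j | (j | j)) <;>
    simp [TAdj, Bool.or_comm]

lemma TAdj_self {p q r : ℕ} (v : TVertex p q r) : TAdj v v = false := by
  rcases v with _ | (i | (i | i)) <;> simp [TAdj] <;> omega

noncomputable def rowSum (p q r : ℕ) (x : TVertex p q r → ℝ) (v : TVertex p q r) : ℝ :=
  ∑ u, if TAdj v u then x u else 0

lemma sum_if_zero {n : ℕ} (h : Fin n → ℝ) :
    (∑ j : Fin n, if (j.val == 0 : Bool) then h j else 0)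
      = if hn : 0 < n then h ⟨0, hn⟩ else 0 := by
  rcases Nat.eq_zero_or_pos n with hn | hn
  · subst hn; simp
  · rw [dif_pos hn, Finset.sum_eq_single ⟨0, hn⟩]
    · simp
    · intro j _ hj
      rw [if_neg]
      simp only [beq_iff_eq]
      exact fun hj0 => hj (Fin.ext hj0)
    · simp

lemma sum_if_adj {n : ℕ} (i : Fin n) (h : Fin n → ℝ) :
    (∑ j : Fin n, if (i.val + 1 == j.val || j.val + 1 == i.val : Bool) then h j else 0)
      = (if hlt : i.val + 1 < n then h ⟨i.val + 1, hlt⟩ else 0)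
        + (if h0 : 0 < i.val then
            h ⟨i.val - 1, lt_of_le_of_lt (Nat.sub_le _ _) i.isLt⟩ else 0) := by
  by_cases hlt : i.val + 1 < n <;> by_cases h0 : 0 < i.val
  · rw [dif_pos hlt, dif_pos h0]
    set a : Fin n := ⟨i.val + 1, hlt⟩
    set b : Fin n := ⟨i.val - 1, lt_of_le_of_lt (Nat.sub_le _ _) i.isLt⟩
    have key : ∀ j : Fin n,
        (if (i.val + 1 == j.val || j.val + 1 == i.val : Bool) then h j else 0)
          = (if j = a then h j else 0) + (if j = b then h j else 0) := by
      intro j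
      by_cases hja : j = a
      · subst hja
        rw [if_pos, if_pos rfl, if_neg, add_zero] <;>
          simp only [a, b, Fin.ext_iff, Fin.val_mk, beq_iff_eq, Bool.or_eq_true, ne_eq, eq_self_iff_true, true_or, or_true] <;>
          omega
      · by_cases hjb : j = b
        · subst hjb
          rw [if_pos, if_neg hja, if_pos rfl, zero_add] <;>
            simp only [a, b, Fin.ext_iff, Fin.val_mk, beq_iff_eq, Bool.or_eq_true, ne_eq, eq_self_iff_true, true_or, or_true] <;>
            omega
        · rw [if_neg, if_neg hja, if_neg hjb, add_zero]
          have h1 : j.val ≠ i.val + 1 := fun hc => hja (Fin.ext hc)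
          have h2 : j.val ≠ i.val - 1 := fun hc => hjb (Fin.ext hc)
          simp only [beq_iff_eq, Bool.or_eq_true]; omega
    rw [Finset.sum_congr rfl (fun j _ => key j), Finset.sum_add_distrib,
      Finset.sum_ite_eq' Finset.univ a h, Finset.sum_ite_eq' Finset.univ b h,
      if_pos (Finset.mem_univ a), if_pos (Finset.mem_univ b)]
  · rw [dif_pos hlt, dif_neg h0]
    set a : Fin n := ⟨i.val + 1, hlt⟩
    rw [Finset.sum_eq_single a, add_zero]
    · rw [if_pos]; simp only [a, beq_iff_eq, Bool.or_eq_true, Fin.val_mk, eq_self_iff_true, true_or, or_true]; try omega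
    · intro j _ hj
      rw [if_neg]
      have h1 : j.val ≠ i.val + 1 := fun hc => hj (Fin.ext hc)
      simp only [beq_iff_eq, Bool.or_eq_true]; omega
    · simp
  · rw [dif_neg hlt, dif_pos h0, zero_add]
    set b : Fin n := ⟨i.val - 1, lt_of_le_of_lt (Nat.sub_le _ _) i.isLt⟩
    rw [Finset.sum_eq_single b]
    · rw [if_pos]; simp only [b, beq_iff_eq, Bool.or_eq_true, Fin.val_mk, eq_self_iff_true, true_or, or_true]; try omega
    · intro j _ hj
      rw [if_neg]
      have h2 : j.val ≠ i.val - 1 := fun hc => hj (Fin.ext hc)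
      have := j.isLt
      simp only [beq_iff_eq, Bool.or_eq_true]; omega
    · simp
  · rw [dif_neg hlt, dif_neg h0]
    rw [Finset.sum_eq_zero, add_zero]
    intro j _
    rw [if_neg]
    have := j.isLt
    simp only [beq_iff_eq, Bool.or_eq_true]; omega

lemma rowSum_center (p q r : ℕ) (x : TVertex p q r → ℝ) :
    rowSum p q r x (Sum.inl ()) =
      (if h : 0 < p - 1 then x (Sum.inr (Sum.inl ⟨0, h⟩)) else 0)
      + ((if h : 0 < q - 1 then x (Sum.inr (Sum.inr (Sum.inl ⟨0, h⟩))) else 0)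
      + (if h : 0 < r - 1 then x (Sum.inr (Sum.inr (Sum.inr ⟨0, h⟩))) else 0)) := by
  unfold rowSum
  rw [Fintype.sum_sum_type, Fintype.sum_sum_type, Fintype.sum_sum_type]
  simp only [TAdj]
  erw [sum_if_zero, sum_if_zero, sum_if_zero]
  simp

lemma rowSum_arm1 (p q r : ℕ) (x : TVertex p q r → ℝ) (i : Fin (p - 1)) :
    rowSum p q r x (Sum.inr (Sum.inl i)) =
      (if i.val = 0 then x (Sum.inl ()) else 0)
      + ((if hlt : i.val + 1 < p - 1 then x (Sum.inr (Sum.inl ⟨i.val + 1, hlt⟩)) else 0)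
        + (if h0 : 0 < i.val then
            x (Sum.inr (Sum.inl ⟨i.val - 1, lt_of_le_of_lt (Nat.sub_le _ _) i.isLt⟩)) else 0)) := by
  unfold rowSum
  rw [Fintype.sum_sum_type, Fintype.sum_sum_type, Fintype.sum_sum_type]
  simp only [TAdj]
  erw [sum_if_adj]
  simp [beq_iff_eq]

lemma rowSum_arm2 (p q r : ℕ) (x : TVertex p q r → ℝ) (i : Fin (q - 1)) :
    rowSum p q r x (Sum.inr (Sum.inr (Sum.inl i))) =
      (if i.val = 0 then x (Sum.inl ()) else 0)
      + ((if hlt : i.val + 1 < q - 1 then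
            x (Sum.inr (Sum.inr (Sum.inl ⟨i.val + 1, hlt⟩))) else 0)
        + (if h0 : 0 < i.val then
            x (Sum.inr (Sum.inr (Sum.inl ⟨i.val - 1,
              lt_of_le_of_lt (Nat.sub_le _ _) i.isLt⟩))) else 0)) := by
  unfold rowSum
  rw [Fintype.sum_sum_type, Fintype.sum_sum_type, Fintype.sum_sum_type]
  simp only [TAdj]
  erw [sum_if_adj]
  simp [beq_iff_eq]

lemma rowSum_arm3 (p q r : ℕ) (x : TVertex p q r → ℝ) (i : Fin (r - 1)) :
    rowSum p q r x (Sum.inr (Sum.inr (Sum.inr i))) =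
      (if i.val = 0 then x (Sum.inl ()) else 0)
      + ((if hlt : i.val + 1 < r - 1 then
            x (Sum.inr (Sum.inr (Sum.inr ⟨i.val + 1, hlt⟩))) else 0)
        + (if h0 : 0 < i.val then
            x (Sum.inr (Sum.inr (Sum.inr ⟨i.val - 1,
              lt_of_le_of_lt (Nat.sub_le _ _) i.isLt⟩))) else 0)) := by
  unfold rowSum
  rw [Fintype.sum_sum_type, Fintype.sum_sum_type, Fintype.sum_sum_type]
  simp only [TAdj]
  erw [sum_if_adj]
  simp [beq_iff_eq]

lemma gram_entry (p q r : ℕ) (v w : TVertex p q r) :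
    ((gramT p q r).map (Int.cast : ℤ → ℝ)) v w
      = (if v = w then 2 else 0) + (if TAdj v w then -1 else 0) := by
  simp only [Matrix.map_apply, gramT, Matrix.of_apply]
  by_cases hvw : v = w
  · subst hvw; rw [if_pos rfl, if_pos rfl, TAdj_self]; norm_num
  · rw [if_neg hvw, if_neg hvw, zero_add]
    split_ifs <;> norm_num

lemma gram_isHermitian (p q r : ℕ) :
    ((gramT p q r).map (Int.cast : ℤ → ℝ)).IsHermitian := by
  refine Matrix.IsHermitian.ext fun v w => ?_
  rw [star_trivial, gram_entry, gram_entry, TAdj_symm w v]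
  congr 2
  exact propext ⟨Eq.symm, Eq.symm⟩

lemma gram_mulVec (p q r : ℕ) (x : TVertex p q r → ℝ) (v : TVertex p q r) :
    (((gramT p q r).map (Int.cast : ℤ → ℝ)).mulVec x) v = 2 * x v - rowSum p q r x v := by
  unfold Matrix.mulVec dotProduct
  have : ∀ u, ((gramT p q r).map (Int.cast : ℤ → ℝ)) v u * x u
      = (if v = u then 2 * x u else 0) + (if TAdj v u then -(x u) else 0) := by
    intro u
    rw [gram_entry, add_mul]
    congr 1 <;> split_ifs <;> ring
  rw [Finset.sum_congr rfl fun u _ => this u, Finset.sum_add_distrib]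
  have h1 : (∑ u, if v = u then 2 * x u else 0) = 2 * x v := by
    rw [Finset.sum_ite_eq Finset.univ v (fun u => 2 * x u), if_pos (Finset.mem_univ v)]
  have h2 : (∑ u, if TAdj v u then -(x u) else 0) = -rowSum p q r x v := by
    rw [rowSum, ← Finset.sum_neg_distrib]
    exact Finset.sum_congr rfl fun u _ => by split_ifs <;> simp
  rw [h1, h2]; ring

lemma gram_quadform (p q r : ℕ) (x : TVertex p q r → ℝ) :
    dotProduct (star x) (((gramT p q r).map (Int.cast : ℤ → ℝ)).mulVec x)
      = ∑ v, x v * (2 * x v - rowSum p q r x v) := by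
  unfold dotProduct
  exact Finset.sum_congr rfl fun v _ => by rw [gram_mulVec]; simp

lemma gram_posdef_of_cert (p q r : ℕ) (c : TVertex p q r → ℝ) (hc : ∀ v, 0 < c v)
    (hcert : ∀ v, rowSum p q r c v < 2 * c v) :
    ((gramT p q r).map (Int.cast : ℤ → ℝ)).PosDef := by
  refine Matrix.PosDef.of_dotProduct_mulVec_pos (gram_isHermitian p q r) fun x hx => ?_
  rw [gram_quadform]
  set y : TVertex p q r → ℝ := fun v => x v / c v with hy
  have hxy : ∀ v, x v = c v * y v := by
    intro v
    show x v = c v * (x v / c v)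
    rw [mul_comm]
    exact (div_mul_cancel₀ (x v) (hc v).ne').symm
  obtain ⟨v0, hv0⟩ : ∃ v, x v ≠ 0 := Function.ne_iff.mp hx
  have hyv0 : y v0 ≠ 0 := by
    rw [hy]
    exact div_ne_zero hv0 (hc v0).ne'
  -- rewrite the quadratic form
  have key : ∀ v, x v * (2 * x v - rowSum p q r x v)
      = 2 * c v ^ 2 * y v ^ 2
        - ∑ u, (if TAdj v u then (c v * y v) * (c u * y u) else 0) := by
    intro v
    have : x v * rowSum p q r x v = ∑ u, (if TAdj v u then (c v * y v) * (c u * y u) else 0) := by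
      rw [rowSum, Finset.mul_sum]
      refine Finset.sum_congr rfl fun u _ => ?_
      rw [← hxy v, ← hxy u]
      split_ifs <;> ring
    rw [← this, hxy v]
    ring
  rw [Finset.sum_congr rfl fun v _ => key v, Finset.sum_sub_distrib]
  -- bound the interaction term
  have step1 : ∀ v u, (if TAdj v u then (c v * y v) * (c u * y u) else 0)
      ≤ (if TAdj v u then c v * c u * y v ^ 2 / 2 else 0)
        + (if TAdj v u then c v * c u * y u ^ 2 / 2 else 0) := by
    intro v u
    split_ifs with h
    · nlinarith [sq_nonneg (y v - y u), mul_pos (hc v) (hc u)]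
    · simp
  have swap : (∑ v, ∑ u, if TAdj v u then c v * c u * y u ^ 2 / 2 else 0)
      = ∑ v, ∑ u, if TAdj v u then c v * c u * y v ^ 2 / 2 else 0 := by
    rw [Finset.sum_comm]
    refine Finset.sum_congr rfl fun v _ => Finset.sum_congr rfl fun u _ => ?_
    rw [TAdj_symm]
    ring_nf
  have collect : ∀ v, (∑ u, if TAdj v u then c v * c u * y v ^ 2 / 2 else 0)
      = c v * y v ^ 2 / 2 * rowSum p q r c v := by
    intro v
    rw [rowSum, Finset.mul_sum]
    refine Finset.sum_congr rfl fun u _ => ?_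
    split_ifs <;> ring
  have hbound : (∑ v, ∑ u, if TAdj v u then (c v * y v) * (c u * y u) else 0)
      ≤ ∑ v, c v * y v ^ 2 * rowSum p q r c v := by
    calc (∑ v, ∑ u, if TAdj v u then (c v * y v) * (c u * y u) else 0)
        ≤ ∑ v, ∑ u, ((if TAdj v u then c v * c u * y v ^ 2 / 2 else 0)
            + (if TAdj v u then c v * c u * y u ^ 2 / 2 else 0)) := by
          refine Finset.sum_le_sum fun v _ => Finset.sum_le_sum fun u _ => step1 v u
      _ = (∑ v, ∑ u, if TAdj v u then c v * c u * y v ^ 2 / 2 else 0)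
            + (∑ v, ∑ u, if TAdj v u then c v * c u * y u ^ 2 / 2 else 0) := by
          rw [← Finset.sum_add_distrib]
          exact Finset.sum_congr rfl fun v _ => Finset.sum_add_distrib
      _ = ∑ v, c v * y v ^ 2 * rowSum p q r c v := by
          rw [swap, ← Finset.sum_add_distrib]
          refine Finset.sum_congr rfl fun v _ => ?_
          rw [collect]
          ring
  have hterm : ∀ v, c v * y v ^ 2 * rowSum p q r c v ≤ 2 * c v ^ 2 * y v ^ 2 := by
    intro v
    have h1 : rowSum p q r c v ≤ 2 * c v := (hcert v).le
    nlinarith [mul_nonneg (sub_nonneg.2 h1) (mul_nonneg (hc v).le (sq_nonneg (y v)))]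
  have hterm0 : c v0 * y v0 ^ 2 * rowSum p q r c v0 < 2 * c v0 ^ 2 * y v0 ^ 2 := by
    have h1 : rowSum p q r c v0 < 2 * c v0 := hcert v0
    have h2 : 0 < y v0 ^ 2 := lt_of_le_of_ne (sq_nonneg _) (Ne.symm (pow_ne_zero 2 hyv0))
    nlinarith [mul_pos (sub_pos.2 h1) (mul_pos (hc v0) h2)]
  have : (∑ v, c v * y v ^ 2 * rowSum p q r c v) < ∑ v, 2 * c v ^ 2 * y v ^ 2 :=
    Finset.sum_lt_sum (fun v _ => hterm v) ⟨v0, Finset.mem_univ v0, hterm0⟩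
  linarith

lemma gram_not_posdef (p q r : ℕ) (x : TVertex p q r → ℝ) (hx : x ≠ 0)
    (h : ∀ v, x v * (2 * x v - rowSum p q r x v) ≤ 0) :
    ¬ ((gramT p q r).map (Int.cast : ℤ → ℝ)).PosDef := by
  intro hPD
  have h1 := hPD.dotProduct_mulVec_pos hx
  rw [gram_quadform] at h1
  have h2 : (∑ v, x v * (2 * x v - rowSum p q r x v)) ≤ 0 :=
    Finset.sum_nonpos fun v _ => h v
  linarith

def xa (p q r : ℕ) : TVertex p q r → ℝ := fun v =>
  match v with
  | Sum.inl _ => 3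
  | Sum.inr (Sum.inl i) => if i.val = 0 then 2 else if i.val = 1 then 1 else 0
  | Sum.inr (Sum.inr (Sum.inl i)) => if i.val = 0 then 2 else if i.val = 1 then 1 else 0
  | Sum.inr (Sum.inr (Sum.inr i)) => if i.val = 0 then 2 else if i.val = 1 then 1 else 0

lemma negA (p q r : ℕ) (hp : 3 ≤ p) (hq : 3 ≤ q) (hr : 3 ≤ r) :
    ¬ ((gramT p q r).map (Int.cast : ℤ → ℝ)).PosDef := by
  apply gram_not_posdef p q r (xa p q r)
  · intro h
    have := congrFun h (Sum.inl ())
    simp [xa] at this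
  · intro v
    rcases v with _ | (i | (i | i))
    · rw [rowSum_center]
      simp only [xa]
      rw [dif_pos (by omega : 0 < p - 1), dif_pos (by omega : 0 < q - 1),
        dif_pos (by omega : 0 < r - 1)]
      norm_num
    · rw [rowSum_arm1]
      simp only [xa]
      rcases (by omega : i.val = 0 ∨ i.val = 1 ∨ 2 ≤ i.val) with hi | hi | hi
      · simp only [hi]
        rw [dif_pos (by omega : 0 + 1 < p - 1), dif_neg (by omega : ¬ 0 < 0)]
        norm_num
      · simp only [hi]
        by_cases h2 : 1 + 1 < p - 1
        · rw [dif_pos h2, dif_pos (by omega : 0 < 1)]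
          norm_num
        · rw [dif_neg h2, dif_pos (by omega : 0 < 1)]
          norm_num
      · rw [if_neg (by omega), if_neg (by omega)]
        simp
    · rw [rowSum_arm2]
      simp only [xa]
      rcases (by omega : i.val = 0 ∨ i.val = 1 ∨ 2 ≤ i.val) with hi | hi | hi
      · simp only [hi]
        rw [dif_pos (by omega : 0 + 1 < q - 1), dif_neg (by omega : ¬ 0 < 0)]
        norm_num
      · simp only [hi]
        by_cases h2 : 1 + 1 < q - 1
        · rw [dif_pos h2, dif_pos (by omega : 0 < 1)]
          norm_num
        · rw [dif_neg h2, dif_pos (by omega : 0 < 1)]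
          norm_num
      · rw [if_neg (by omega), if_neg (by omega)]
        simp
    · rw [rowSum_arm3]
      simp only [xa]
      rcases (by omega : i.val = 0 ∨ i.val = 1 ∨ 2 ≤ i.val) with hi | hi | hi
      · simp only [hi]
        rw [dif_pos (by omega : 0 + 1 < r - 1), dif_neg (by omega : ¬ 0 < 0)]
        norm_num
      · simp only [hi]
        by_cases h2 : 1 + 1 < r - 1
        · rw [dif_pos h2, dif_pos (by omega : 0 < 1)]
          norm_num
        · rw [dif_neg h2, dif_pos (by omega : 0 < 1)]
          norm_num
      · rw [if_neg (by omega), if_neg (by omega)]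
        simp

def xb (q r : ℕ) : TVertex 2 q r → ℝ := fun v =>
  match v with
  | Sum.inl _ => 4
  | Sum.inr (Sum.inl _) => 2
  | Sum.inr (Sum.inr (Sum.inl i)) => if i.val ≤ 2 then 3 - (i.val : ℝ) else 0
  | Sum.inr (Sum.inr (Sum.inr i)) => if i.val ≤ 2 then 3 - (i.val : ℝ) else 0

lemma negB (q r : ℕ) (hq : 4 ≤ q) (hr : 4 ≤ r) :
    ¬ ((gramT 2 q r).map (Int.cast : ℤ → ℝ)).PosDef := by
  apply gram_not_posdef 2 q r (xb q r)
  · intro h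
    have := congrFun h (Sum.inl ())
    simp [xb] at this
  · intro v
    rcases v with _ | (i | (i | i))
    · rw [rowSum_center]
      simp only [xb]
      rw [dif_pos (by omega : 0 < 2 - 1), dif_pos (by omega : 0 < q - 1),
        dif_pos (by omega : 0 < r - 1)]
      norm_num
    · rw [rowSum_arm1]
      simp only [xb]
      have hi : i.val = 0 := by omega
      simp only [hi]
      rw [dif_neg (by omega : ¬ 0 + 1 < 2 - 1), dif_neg (by omega : ¬ 0 < 0)]
      norm_num
    · rw [rowSum_arm2]
      simp only [xb]
      rcases (by omega : i.val = 0 ∨ i.val = 1 ∨ i.val = 2 ∨ 3 ≤ i.val) with hi | hi | hi | hi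
      · simp only [hi]
        rw [dif_pos (by omega : 0 + 1 < q - 1), dif_neg (by omega : ¬ 0 < 0)]
        norm_num
      · simp only [hi]
        rw [dif_pos (by omega : 1 + 1 < q - 1), dif_pos (by omega : 0 < 1)]
        norm_num
      · simp only [hi]
        by_cases h2 : 2 + 1 < q - 1
        · rw [dif_pos h2, dif_pos (by omega : 0 < 2)]
          norm_num
        · rw [dif_neg h2, dif_pos (by omega : 0 < 2)]
          norm_num
      · rw [if_neg (by omega)]
        simp
    · rw [rowSum_arm3]
      simp only [xb]
      rcases (by omega : i.val = 0 ∨ i.val = 1 ∨ i.val = 2 ∨ 3 ≤ i.val) with hi | hi | hi | hi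
      · simp only [hi]
        rw [dif_pos (by omega : 0 + 1 < r - 1), dif_neg (by omega : ¬ 0 < 0)]
        norm_num
      · simp only [hi]
        rw [dif_pos (by omega : 1 + 1 < r - 1), dif_pos (by omega : 0 < 1)]
        norm_num
      · simp only [hi]
        by_cases h2 : 2 + 1 < r - 1
        · rw [dif_pos h2, dif_pos (by omega : 0 < 2)]
          norm_num
        · rw [dif_neg h2, dif_pos (by omega : 0 < 2)]
          norm_num
      · rw [if_neg (by omega)]
        simp

def xc (r : ℕ) : TVertex 2 3 r → ℝ := fun v =>
  match v with
  | Sum.inl _ => 6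
  | Sum.inr (Sum.inl _) => 3
  | Sum.inr (Sum.inr (Sum.inl i)) => if i.val = 0 then 4 else 2
  | Sum.inr (Sum.inr (Sum.inr i)) => if i.val ≤ 4 then 5 - (i.val : ℝ) else 0

lemma negC (r : ℕ) (hr : 6 ≤ r) :
    ¬ ((gramT 2 3 r).map (Int.cast : ℤ → ℝ)).PosDef := by
  apply gram_not_posdef 2 3 r (xc r)
  · intro h
    have := congrFun h (Sum.inl ())
    simp [xc] at this
  · intro v
    rcases v with _ | (i | (i | i))
    · rw [rowSum_center]
      simp only [xc]
      rw [dif_pos (by omega : 0 < 2 - 1), dif_pos (by omega : 0 < 3 - 1),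
        dif_pos (by omega : 0 < r - 1)]
      norm_num
    · rw [rowSum_arm1]
      simp only [xc]
      have hi : i.val = 0 := by omega
      simp only [hi]
      rw [dif_neg (by omega : ¬ 0 + 1 < 2 - 1), dif_neg (by omega : ¬ 0 < 0)]
      norm_num
    · rw [rowSum_arm2]
      simp only [xc]
      rcases (by omega : i.val = 0 ∨ i.val = 1) with hi | hi
      · simp only [hi]
        rw [dif_pos (by omega : 0 + 1 < 3 - 1), dif_neg (by omega : ¬ 0 < 0)]
        norm_num
      · simp only [hi]
        rw [dif_neg (by omega : ¬ 1 + 1 < 3 - 1), dif_pos (by omega : 0 < 1)]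
        norm_num
    · rw [rowSum_arm3]
      simp only [xc]
      rcases (by omega : i.val = 0 ∨ i.val = 1 ∨ i.val = 2 ∨ i.val = 3 ∨ i.val = 4 ∨ 5 ≤ i.val)
        with hi | hi | hi | hi | hi | hi
      · simp only [hi]
        rw [dif_pos (by omega : 0 + 1 < r - 1), dif_neg (by omega : ¬ 0 < 0)]
        norm_num
      · simp only [hi]
        rw [dif_pos (by omega : 1 + 1 < r - 1), dif_pos (by omega : 0 < 1)]
        norm_num
      · simp only [hi]
        rw [dif_pos (by omega : 2 + 1 < r - 1), dif_pos (by omega : 0 < 2)]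
        norm_num
      · simp only [hi]
        rw [dif_pos (by omega : 3 + 1 < r - 1), dif_pos (by omega : 0 < 3)]
        norm_num
      · simp only [hi]
        by_cases h2 : 4 + 1 < r - 1
        · rw [dif_pos h2, dif_pos (by omega : 0 < 4)]
          norm_num
        · rw [dif_neg h2, dif_pos (by omega : 0 < 4)]
          norm_num
      · rw [if_neg (by omega)]
        simp

def c1 (q r : ℕ) : TVertex 1 q r → ℝ := fun v =>
  match v with
  | Sum.inl _ => (q : ℝ) * r
  | Sum.inr (Sum.inl i) => i.elim0
  | Sum.inr (Sum.inr (Sum.inl i)) => ((q : ℝ) - 1 - i.val) * ((r : ℝ) + 1 + i.val)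
  | Sum.inr (Sum.inr (Sum.inr i)) => ((q : ℝ) + 1 + i.val) * ((r : ℝ) - 1 - i.val)

lemma pos1 (q r : ℕ) (hq : 1 ≤ q) (hr : 1 ≤ r) :
    ((gramT 1 q r).map (Int.cast : ℤ → ℝ)).PosDef := by
  have hq' : (1 : ℝ) ≤ q := by exact_mod_cast hq
  have hr' : (1 : ℝ) ≤ r := by exact_mod_cast hr
  apply gram_posdef_of_cert 1 q r (c1 q r)
  · intro v
    rcases v with _ | (i | (i | i))
    · simp only [c1]; nlinarith
    · exact i.elim0
    · simp only [c1]
      have hlt := i.isLt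
      have h2 : (i.val : ℝ) + 2 ≤ q := by exact_mod_cast (by omega : i.val + 2 ≤ q)
      have h3 : (0 : ℝ) ≤ i.val := Nat.cast_nonneg _
      have := mul_pos (show (0:ℝ) < (q : ℝ) - 1 - i.val by linarith)
        (show (0:ℝ) < (r : ℝ) + 1 + i.val by linarith)
      linarith
    · simp only [c1]
      have hlt := i.isLt
      have h2 : (i.val : ℝ) + 2 ≤ r := by exact_mod_cast (by omega : i.val + 2 ≤ r)
      have h3 : (0 : ℝ) ≤ i.val := Nat.cast_nonneg _
      have := mul_pos (show (0:ℝ) < (q : ℝ) + 1 + i.val by linarith)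
        (show (0:ℝ) < (r : ℝ) - 1 - i.val by linarith)
      linarith
  · intro v
    rcases v with _ | (i | (i | i))
    · rw [rowSum_center]
      simp only [c1]
      rw [dif_neg (by omega : ¬ 0 < 1 - 1)]
      simp only [Fin.val_mk, Nat.cast_zero]
      split_ifs with h1 h2 h2
      · have hq2 : (2 : ℝ) ≤ q := by exact_mod_cast (by omega : 2 ≤ q)
        have hr2 : (2 : ℝ) ≤ r := by exact_mod_cast (by omega : 2 ≤ r)
        nlinarith
      · have hr1 : (r : ℝ) = 1 := by exact_mod_cast (by omega : r = 1)
        have hq2 : (2 : ℝ) ≤ q := by exact_mod_cast (by omega : 2 ≤ q)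
        nlinarith
      · have hq1 : (q : ℝ) = 1 := by exact_mod_cast (by omega : q = 1)
        have hr2 : (2 : ℝ) ≤ r := by exact_mod_cast (by omega : 2 ≤ r)
        nlinarith
      · nlinarith
    · exact i.elim0
    · rw [rowSum_arm2]
      simp only [c1]
      have hlt := i.isLt
      have h2 : (i.val : ℝ) + 2 ≤ q := by exact_mod_cast (by omega : i.val + 2 ≤ q)
      have h3 : (0 : ℝ) ≤ i.val := Nat.cast_nonneg _
      rcases (by omega : i.val = 0 ∨ 1 ≤ i.val) with hi | hi
      · simp only [hi]
        rw [if_pos trivial, dif_neg (by omega : ¬ 0 < 0)]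
        by_cases hm : 0 + 1 < q - 1
        · rw [dif_pos hm]
          simp only [Fin.val_mk, Nat.cast_zero]
          have hq3 : (3 : ℝ) ≤ q := by exact_mod_cast (by omega : 3 ≤ q)
          push_cast
          nlinarith
        · rw [dif_neg hm]
          have hq2 : (q : ℝ) = 2 := by exact_mod_cast (by omega : q = 2)
          simp only [Nat.cast_zero]
          nlinarith
      · rw [if_neg (by omega), dif_pos (by omega : 0 < i.val)]
        have hsub : ((i.val - 1 : ℕ) : ℝ) = (i.val : ℝ) - 1 := by
          rw [Nat.cast_sub (by omega : 1 ≤ i.val)]; norm_num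
        by_cases hm : i.val + 1 < q - 1
        · rw [dif_pos hm]
          simp only [Fin.val_mk, hsub]
          push_cast
          nlinarith
        · rw [dif_neg hm]
          simp only [Fin.val_mk, hsub]
          have h4 : i.val + 2 = q := by omega
          have hA : (i.val : ℝ) = (q : ℝ) - 2 := by
            have h5 : ((i.val + 2 : ℕ) : ℝ) = q := by rw [h4]
            push_cast at h5; linarith
          nlinarith
    · rw [rowSum_arm3]
      simp only [c1]
      have hlt := i.isLt
      have h2 : (i.val : ℝ) + 2 ≤ r := by exact_mod_cast (by omega : i.val + 2 ≤ r)
      have h3 : (0 : ℝ) ≤ i.val := Nat.cast_nonneg _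
      rcases (by omega : i.val = 0 ∨ 1 ≤ i.val) with hi | hi
      · simp only [hi]
        rw [if_pos trivial, dif_neg (by omega : ¬ 0 < 0)]
        by_cases hm : 0 + 1 < r - 1
        · rw [dif_pos hm]
          simp only [Fin.val_mk, Nat.cast_zero]
          have hr3 : (3 : ℝ) ≤ r := by exact_mod_cast (by omega : 3 ≤ r)
          push_cast
          nlinarith
        · rw [dif_neg hm]
          have hr2 : (r : ℝ) = 2 := by exact_mod_cast (by omega : r = 2)
          simp only [Nat.cast_zero]
          nlinarith
      · rw [if_neg (by omega), dif_pos (by omega : 0 < i.val)]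
        have hsub : ((i.val - 1 : ℕ) : ℝ) = (i.val : ℝ) - 1 := by
          rw [Nat.cast_sub (by omega : 1 ≤ i.val)]; norm_num
        by_cases hm : i.val + 1 < r - 1
        · rw [dif_pos hm]
          simp only [Fin.val_mk, hsub]
          push_cast
          nlinarith
        · rw [dif_neg hm]
          simp only [Fin.val_mk, hsub]
          have h4 : i.val + 2 = r := by omega
          have hA : (i.val : ℝ) = (r : ℝ) - 2 := by
            have h5 : ((i.val + 2 : ℕ) : ℝ) = r := by rw [h4]
            push_cast at h5; linarith
          nlinarith

def c2 (r : ℕ) : TVertex 2 2 r → ℝ := fun v =>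
  match v with
  | Sum.inl _ => 4 * (r : ℝ) ^ 2
  | Sum.inr (Sum.inl _) => 2 * (r : ℝ) ^ 2 + 1
  | Sum.inr (Sum.inr (Sum.inl _)) => 2 * (r : ℝ) ^ 2 + 1
  | Sum.inr (Sum.inr (Sum.inr i)) => 4 * ((r : ℝ) ^ 2 - ((i.val : ℝ) + 1) ^ 2)

lemma pos2 (r : ℕ) (hr : 2 ≤ r) :
    ((gramT 2 2 r).map (Int.cast : ℤ → ℝ)).PosDef := by
  have hr' : (2 : ℝ) ≤ r := by exact_mod_cast hr
  apply gram_posdef_of_cert 2 2 r (c2 r)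
  · intro v
    rcases v with _ | (i | (i | i))
    · simp only [c2]; nlinarith
    · simp only [c2]; nlinarith
    · simp only [c2]; nlinarith
    · simp only [c2]
      have hlt := i.isLt
      have h2 : (i.val : ℝ) + 2 ≤ r := by exact_mod_cast (by omega : i.val + 2 ≤ r)
      have h3 : (0 : ℝ) ≤ i.val := Nat.cast_nonneg _
      nlinarith
  · intro v
    rcases v with _ | (i | (i | i))
    · rw [rowSum_center]
      simp only [c2]
      rw [dif_pos (by omega : 0 < r - 1)]
      simp only [Fin.val_mk, Nat.cast_zero]
      norm_num
      nlinarith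
    · rw [rowSum_arm1]
      simp only [c2]
      have hi : i.val = 0 := by omega
      simp only [hi]
      rw [if_pos trivial, dif_neg (by omega : ¬ 0 + 1 < 2 - 1), dif_neg (by omega : ¬ 0 < 0)]
      nlinarith
    · rw [rowSum_arm2]
      simp only [c2]
      have hi : i.val = 0 := by omega
      simp only [hi]
      rw [if_pos trivial, dif_neg (by omega : ¬ 0 + 1 < 2 - 1), dif_neg (by omega : ¬ 0 < 0)]
      nlinarith
    · rw [rowSum_arm3]
      simp only [c2]
      have hlt := i.isLt
      have h2 : (i.val : ℝ) + 2 ≤ r := by exact_mod_cast (by omega : i.val + 2 ≤ r)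
      have h3 : (0 : ℝ) ≤ i.val := Nat.cast_nonneg _
      rcases (by omega : i.val = 0 ∨ 1 ≤ i.val) with hi | hi
      · simp only [hi]
        rw [if_pos trivial, dif_neg (by omega : ¬ 0 < 0)]
        by_cases hm : 0 + 1 < r - 1
        · rw [dif_pos hm]
          simp only [Fin.val_mk, Nat.cast_zero]
          push_cast
          nlinarith
        · rw [dif_neg hm]
          have hr2 : (r : ℝ) = 2 := by exact_mod_cast (by omega : r = 2)
          simp only [Nat.cast_zero]
          nlinarith
      · rw [if_neg (by omega), dif_pos (by omega : 0 < i.val)]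
        have hsub : ((i.val - 1 : ℕ) : ℝ) = (i.val : ℝ) - 1 := by
          rw [Nat.cast_sub (by omega : 1 ≤ i.val)]; norm_num
        by_cases hm : i.val + 1 < r - 1
        · rw [dif_pos hm]
          simp only [Fin.val_mk, hsub]
          push_cast
          nlinarith
        · rw [dif_neg hm]
          simp only [Fin.val_mk, hsub]
          have h4 : i.val + 2 = r := by omega
          have hA : (i.val : ℝ) = (r : ℝ) - 2 := by
            have h5 : ((i.val + 2 : ℕ) : ℝ) = r := by rw [h4]
            push_cast at h5; linarith
          nlinarith

def cE1 : TVertex 2 3 3 → ℝ := fun v =>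
  match v with
  | Sum.inl _ => 21
  | Sum.inr (Sum.inl _) => 11
  | Sum.inr (Sum.inr (Sum.inl i)) => if i.val = 0 then 15 else 8
  | Sum.inr (Sum.inr (Sum.inr i)) => if i.val = 0 then 15 else 8

lemma posE1 : ((gramT 2 3 3).map (Int.cast : ℤ → ℝ)).PosDef := by
  apply gram_posdef_of_cert 2 3 3 cE1
  · intro v
    rcases v with _ | (i | (i | i))
    · norm_num [cE1]
    · norm_num [cE1]
    · simp only [cE1]; split_ifs <;> norm_num
    · simp only [cE1]; split_ifs <;> norm_num
  · intro v
    rcases v with _ | (i | (i | i))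
    · rw [rowSum_center]
      norm_num [cE1, Fin.val_mk]
    · rw [rowSum_arm1]
      have hi : i.val = 0 := by omega
      norm_num [cE1, Fin.val_mk, hi]
    · rw [rowSum_arm2]
      rcases (by omega : i.val = 0 ∨ i.val = 1) with hi | hi <;>
        norm_num [cE1, Fin.val_mk, hi]
    · rw [rowSum_arm3]
      rcases (by omega : i.val = 0 ∨ i.val = 1) with hi | hi <;>
        norm_num [cE1, Fin.val_mk, hi]

def cE2 : TVertex 2 3 4 → ℝ := fun v =>
  match v with
  | Sum.inl _ => 96
  | Sum.inr (Sum.inl _) => 49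
  | Sum.inr (Sum.inr (Sum.inl i)) => if i.val = 0 then 66 else 34
  | Sum.inr (Sum.inr (Sum.inr i)) => if i.val = 0 then 75 else if i.val = 1 then 52 else 27

lemma posE2 : ((gramT 2 3 4).map (Int.cast : ℤ → ℝ)).PosDef := by
  apply gram_posdef_of_cert 2 3 4 cE2
  · intro v
    rcases v with _ | (i | (i | i))
    · norm_num [cE2]
    · norm_num [cE2]
    · simp only [cE2]; split_ifs <;> norm_num
    · simp only [cE2]; split_ifs <;> norm_num
  · intro v
    rcases v with _ | (i | (i | i))
    · rw [rowSum_center]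
      norm_num [cE2, Fin.val_mk]
    · rw [rowSum_arm1]
      have hi : i.val = 0 := by omega
      norm_num [cE2, Fin.val_mk, hi]
    · rw [rowSum_arm2]
      rcases (by omega : i.val = 0 ∨ i.val = 1) with hi | hi <;>
        norm_num [cE2, Fin.val_mk, hi]
    · rw [rowSum_arm3]
      rcases (by omega : i.val = 0 ∨ i.val = 1 ∨ i.val = 2) with hi | hi | hi <;>
        norm_num [cE2, Fin.val_mk, hi]

def cE3 : TVertex 2 3 5 → ℝ := fun v =>
  match v with
  | Sum.inl _ => 135
  | Sum.inr (Sum.inl _) => 68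
  | Sum.inr (Sum.inr (Sum.inl i)) => if i.val = 0 then 91 else 46
  | Sum.inr (Sum.inr (Sum.inr i)) => if i.val = 0 then 110 else if i.val = 1 then 84 else if i.val = 2 then 57 else 29

lemma posE3 : ((gramT 2 3 5).map (Int.cast : ℤ → ℝ)).PosDef := by
  apply gram_posdef_of_cert 2 3 5 cE3
  · intro v
    rcases v with _ | (i | (i | i))
    · norm_num [cE3]
    · norm_num [cE3]
    · simp only [cE3]; split_ifs <;> norm_num
    · simp only [cE3]; split_ifs <;> norm_num
  · intro v
    rcases v with _ | (i | (i | i))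
    · rw [rowSum_center]
      norm_num [cE3, Fin.val_mk]
    · rw [rowSum_arm1]
      have hi : i.val = 0 := by omega
      norm_num [cE3, Fin.val_mk, hi]
    · rw [rowSum_arm2]
      rcases (by omega : i.val = 0 ∨ i.val = 1) with hi | hi <;>
        norm_num [cE3, Fin.val_mk, hi]
    · rw [rowSum_arm3]
      rcases (by omega : i.val = 0 ∨ i.val = 1 ∨ i.val = 2 ∨ i.val = 3) with hi | hi | hi | hi <;>
        norm_num [cE3, Fin.val_mk, hi]


/-- for `1 ≤ p ≤ q ≤ r`, the real symmetric matrix `G(p,q,r)` is positive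
definite if and only if `p = 1`, or `(p,q) = (2,2)`, or `(p,q,r)` is one of `(2,3,3)`,
`(2,3,4)`, `(2,3,5)`. -/
theorem stmt10 (p q r : ℕ) (hp : 1 ≤ p) (hpq : p ≤ q) (hqr : q ≤ r) :
    ((gramT p q r).map (Int.cast : ℤ → ℝ)).PosDef ↔
      (p = 1 ∨ (p = 2 ∧ q = 2) ∨
        (p, q, r) = (2, 3, 3) ∨ (p, q, r) = (2, 3, 4) ∨ (p, q, r) = (2, 3, 5)) := by
  constructor
  · intro hPD
    by_contra hcon
    push_neg at hcon
    obtain ⟨h1, h2, h3, h4, h5⟩ := hcon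
    simp only [ne_eq, Prod.mk.injEq] at h3 h4 h5
    have key : 3 ≤ p ∨ (p = 2 ∧ 4 ≤ q) ∨ (p = 2 ∧ q = 3 ∧ 6 ≤ r) := by omega
    rcases key with h | ⟨hp2, hq4⟩ | ⟨hp2, hq3, hr6⟩
    · exact negA p q r h (by omega) (by omega) hPD
    · subst hp2
      exact negB q r hq4 (by omega) hPD
    · subst hp2; subst hq3
      exact negC r hr6 hPD
  · rintro (h1 | ⟨hp2, hq2⟩ | h3 | h4 | h5)
    · subst h1
      exact pos1 q r (by omega) (by omega)
    · subst hp2; subst hq2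
      exact pos2 r (by omega)
    · obtain ⟨hp2, hq3, hr3⟩ : p = 2 ∧ q = 3 ∧ r = 3 := by
        simpa [Prod.ext_iff] using h3
      subst hp2; subst hq3; subst hr3
      exact posE1
    · obtain ⟨hp2, hq3, hr4⟩ : p = 2 ∧ q = 3 ∧ r = 4 := by
        simpa [Prod.ext_iff] using h4
      subst hp2; subst hq3; subst hr4
      exact posE2
    · obtain ⟨hp2, hq3, hr5⟩ : p = 2 ∧ q = 3 ∧ r = 5 := by
        simpa [Prod.ext_iff] using h5
      subst hp2; subst hq3; subst hr5
      exact posE3
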